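/- For every σ > 1, the function χ ↦ R(χ,σ) attains a global minimum over the set [-1,∞)^L at some point χ* lying in the open cube (-1,0)^L; that is, there exists χ* with -1 < χ*_l < 0 for every l and R(χ*,σ) ≤ R(χ,σ) for all χ ∈ [-1,∞)^L. -/

import Mathlib

open Matrix

/-- The matrix `C(χ) = σ B⁻¹ + Diag(λ ⊙ (χ + 𝟙))`. -/
noncomputable def Cmat {L : ℕ} (σ : ℝ) (lam : Fin L → ℝ) (B : Matrix (Fin L) (Fin L) ℝ)
    (χ : Fin L → ℝ) : Matrix (Fin L) (Fin L) ℝ :=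
  σ • B⁻¹ + Matrix.diagonal (fun l => lam l * (χ l + 1))

/-- The replica-symmetric objective
`R(χ,σ) = log det(σ B⁻¹ + Diag(λ ⊙ (χ+𝟙))) + (1/2) ∑ λ_l χ_l²`. -/
noncomputable def Rfun {L : ℕ} (σ : ℝ) (lam : Fin L → ℝ) (B : Matrix (Fin L) (Fin L) ℝ)
    (χ : Fin L → ℝ) : ℝ :=
  Real.log (Cmat σ lam B χ).det + (1 / 2) * ∑ l, lam l * χ l ^ 2

section
variable {L : ℕ} {σ : ℝ} {lam : Fin L → ℝ} {B : Matrix (Fin L) (Fin L) ℝ} {χ : Fin L → ℝ}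

lemma Cmat_posDef (hB : B.PosDef) (hσ : 0 < σ) (hlam : ∀ l, 0 < lam l)
    {χ : Fin L → ℝ} (hχ : ∀ l, -1 ≤ χ l) : (Cmat σ lam B χ).PosDef := by
  have h1 : (σ • B⁻¹ : Matrix (Fin L) (Fin L) ℝ).PosDef := by
    have hh : (σ • B⁻¹ : Matrix (Fin L) (Fin L) ℝ).IsHermitian := by
      rw [Matrix.IsHermitian, Matrix.conjTranspose_smul, hB.inv.1.eq, star_trivial]
    refine Matrix.PosDef.of_dotProduct_mulVec_pos hh fun x hx => ?_
    have := hB.inv.dotProduct_mulVec_pos hx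
    simp only [smul_mulVec, dotProduct_smul, smul_eq_mul]
    positivity
  exact h1.add_posSemidef (Matrix.PosSemidef.diagonal
    (fun l => mul_nonneg (hlam l).le (by linarith [hχ l])))

lemma Cmat_update (χ : Fin L → ℝ) (l : Fin L) (t : ℝ) :
    Cmat σ lam B (Function.update χ l t) =
      (Cmat σ lam B χ).updateRow l
        ((Cmat σ lam B χ) l + (lam l * (t - χ l)) • (Pi.single l 1 : Fin L → ℝ)) := by
  ext i j
  rcases eq_or_ne i l with rfl | hi
  · simp only [Cmat, Matrix.add_apply, Matrix.updateRow_self, Pi.add_apply, Pi.smul_apply,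
      Pi.single_apply, Matrix.diagonal_apply, Matrix.smul_apply, smul_eq_mul,
      Function.update_apply]
    rcases eq_or_ne j i with rfl | hj
    · simp; ring
    · simp [hj, Ne.symm hj]
  · simp only [Cmat, Matrix.add_apply, Matrix.updateRow_ne hi, Matrix.diagonal_apply,
      Function.update_apply, hi, if_false]

lemma Cmat_det_update (χ : Fin L → ℝ) (l : Fin L) (t : ℝ) :
    (Cmat σ lam B (Function.update χ l t)).det =
      (Cmat σ lam B χ).det + lam l * (t - χ l) * (Cmat σ lam B χ).adjugate l l := by
  rw [Cmat_update, Matrix.det_updateRow_add, Matrix.det_updateRow_smul,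
    Matrix.updateRow_eq_self, Matrix.adjugate_apply]

lemma adjugate_eq (hC : (Cmat σ lam B χ).PosDef) (l : Fin L) :
    (Cmat σ lam B χ).adjugate l l = (Cmat σ lam B χ)⁻¹ l l * (Cmat σ lam B χ).det := by
  set C := Cmat σ lam B χ
  have hd : C.det ≠ 0 := hC.det_pos.ne'
  rw [Matrix.inv_def, Matrix.smul_apply, Ring.inverse_eq_inv', smul_eq_mul]
  field_simp

lemma inv_diag_pos (hC : (Cmat σ lam B χ).PosDef) (l : Fin L) :
    0 < (Cmat σ lam B χ)⁻¹ l l := by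
  have h := hC.inv.dotProduct_mulVec_pos (x := (Pi.single l 1 : Fin L → ℝ)) (by
    intro h
    have := congrFun h l
    simp [Pi.single_eq_same] at this)
  simpa [mulVec_single, dotProduct_single, star_trivial, single_dotProduct] using h

lemma inv_diag_le (hB : B.PosDef) (hBdiag : ∀ l, B l l = 1) (hσ : 0 < σ) (hlam : ∀ l, 0 < lam l)
    (hχ : ∀ l, -1 ≤ χ l) (l : Fin L) :
    σ * (Cmat σ lam B χ)⁻¹ l l ≤ 1 := by
  have hC : (Cmat σ lam B χ).PosDef := Cmat_posDef hB hσ hlam hχ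
  set C := Cmat σ lam B χ with hCdef
  set e : Fin L → ℝ := Pi.single l 1 with he
  set y : Fin L → ℝ := C⁻¹ *ᵥ e with hy
  have hCy : C *ᵥ y = e := by
    rw [hy, Matrix.mulVec_mulVec, Matrix.mul_nonsing_inv _ hC.det_pos.ne'.isUnit,
      Matrix.one_mulVec]
  have hyl : y l = C⁻¹ l l := by simp [hy, he, Matrix.mulVec_single]
  have hq1 : y ⬝ᵥ (C *ᵥ y) = y l := by rw [hCy, he, dotProduct_single, mul_one]
  have hD : 0 ≤ y ⬝ᵥ (Matrix.diagonal (fun k => lam k * (χ k + 1)) *ᵥ y) := by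
    have := (Matrix.PosSemidef.diagonal (d := fun k => lam k * (χ k + 1))
      (fun k => mul_nonneg (hlam k).le (by linarith [hχ k]))).dotProduct_mulVec_nonneg y
    simpa using this
  have hsplit : y ⬝ᵥ (C *ᵥ y) = σ * (y ⬝ᵥ (B⁻¹ *ᵥ y))
      + y ⬝ᵥ (Matrix.diagonal (fun k => lam k * (χ k + 1)) *ᵥ y) := by
    have hCeq : C = σ • B⁻¹ + Matrix.diagonal (fun k => lam k * (χ k + 1)) := rfl
    rw [hCeq, Matrix.add_mulVec, dotProduct_add, smul_mulVec, dotProduct_smul, smul_eq_mul]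
  set q : ℝ := y ⬝ᵥ (B⁻¹ *ᵥ y) with hqdef
  have h1 : σ * q ≤ y l := by rw [hsplit] at hq1; linarith
  have hBsymm : B⁻¹ᵀ = B⁻¹ := by
    have h := hB.inv.1
    rwa [Matrix.IsHermitian, Matrix.conjTranspose_eq_transpose_of_trivial] at h
  have hsym : ∀ v w : Fin L → ℝ, v ⬝ᵥ (B⁻¹ *ᵥ w) = w ⬝ᵥ (B⁻¹ *ᵥ v) := by
    intro v w
    rw [Matrix.dotProduct_mulVec]
    conv_lhs => rw [← hBsymm, Matrix.vecMul_transpose]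
    rw [dotProduct_comm]
  set z : Fin L → ℝ := y - σ⁻¹ • (B *ᵥ e) with hz
  have hz0 : 0 ≤ z ⬝ᵥ (B⁻¹ *ᵥ z) := by simpa using hB.inv.posSemidef.dotProduct_mulVec_nonneg z
  have hBBe : B⁻¹ *ᵥ (B *ᵥ e) = e := by
    rw [Matrix.mulVec_mulVec, Matrix.nonsing_inv_mul _ hB.det_pos.ne'.isUnit, Matrix.one_mulVec]
  have e1 : y ⬝ᵥ (B⁻¹ *ᵥ (B *ᵥ e)) = y l := by rw [hBBe, he, dotProduct_single, mul_one]
  have e2 : (B *ᵥ e) ⬝ᵥ (B⁻¹ *ᵥ y) = y l := (hsym (B *ᵥ e) y).trans e1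
  have e3 : (B *ᵥ e) ⬝ᵥ (B⁻¹ *ᵥ (B *ᵥ e)) = 1 := by
    rw [hBBe, he, dotProduct_single, mul_one, Matrix.mulVec_single]
    simp [hBdiag l]
  have expand : z ⬝ᵥ (B⁻¹ *ᵥ z) = q - σ⁻¹ * ((B *ᵥ e) ⬝ᵥ (B⁻¹ *ᵥ y))
      - σ⁻¹ * (y ⬝ᵥ (B⁻¹ *ᵥ (B *ᵥ e)))
      + σ⁻¹ * (σ⁻¹ * ((B *ᵥ e) ⬝ᵥ (B⁻¹ *ᵥ (B *ᵥ e)))) := by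
    simp only [hz, hqdef, Matrix.mulVec_sub, Matrix.mulVec_smul, dotProduct_sub,
      sub_dotProduct, dotProduct_smul, smul_dotProduct, smul_eq_mul]
    ring
  rw [e1, e2, e3] at expand
  have h3 : 0 ≤ q - 2 * σ⁻¹ * y l + σ⁻¹ * σ⁻¹ := by rw [expand] at hz0; linarith
  have hσσ : σ * σ⁻¹ = 1 := mul_inv_cancel₀ hσ.ne'
  rw [← hyl]
  nlinarith [h1, h3, hσ, hσσ, mul_nonneg hσ.le (mul_nonneg hσ.le h3)]

lemma Rfun_update_le (hB : B.PosDef) (hσ : 0 < σ) (hlam : ∀ l, 0 < lam l)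
    (hχ : ∀ k, -1 ≤ χ k) (l : Fin L) {t : ℝ} (ht : -1 ≤ t) :
    Rfun σ lam B (Function.update χ l t) ≤ Rfun σ lam B χ
      + lam l * (t - χ l) * ((Cmat σ lam B χ)⁻¹ l l + (t + χ l) / 2) := by
  have hC : (Cmat σ lam B χ).PosDef := Cmat_posDef hB hσ hlam hχ
  have hχ' : ∀ k, -1 ≤ Function.update χ l t k := by
    intro k
    rw [Function.update_apply]
    split
    · exact ht
    · exact hχ k
  have hC' : (Cmat σ lam B (Function.update χ l t)).PosDef := Cmat_posDef hB hσ hlam hχ'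
  have hd : 0 < (Cmat σ lam B χ).det := hC.det_pos
  have hd' : 0 < (Cmat σ lam B (Function.update χ l t)).det := hC'.det_pos
  set p : ℝ := (Cmat σ lam B χ)⁻¹ l l with hp
  have hdet : (Cmat σ lam B (Function.update χ l t)).det
      = (Cmat σ lam B χ).det + lam l * (t - χ l) * (p * (Cmat σ lam B χ).det) := by
    rw [Cmat_det_update, adjugate_eq hC]
  have hratio : (Cmat σ lam B (Function.update χ l t)).det / (Cmat σ lam B χ).det
      = 1 + lam l * (t - χ l) * p := by
    rw [hdet]; field_simp
  have hlog : Real.log (Cmat σ lam B (Function.update χ l t)).det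
      ≤ Real.log (Cmat σ lam B χ).det + lam l * (t - χ l) * p := by
    have h0 := Real.log_le_sub_one_of_pos (div_pos hd' hd)
    rw [Real.log_div hd'.ne' hd.ne', hratio] at h0
    linarith
  have hsum : ∑ k, lam k * (Function.update χ l t k) ^ 2
      = ∑ k, lam k * χ k ^ 2 + (lam l * t ^ 2 - lam l * χ l ^ 2) := by
    have hfun : ∀ k, lam k * (Function.update χ l t k) ^ 2
        = Function.update (fun k => lam k * χ k ^ 2) l (lam l * t ^ 2) k := by
      intro k
      rcases eq_or_ne k l with rfl | hk
      · simp
      · simp [Function.update_of_ne hk]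
    rw [Finset.sum_congr rfl (fun k _ => hfun k),
      Finset.sum_update_of_mem (Finset.mem_univ l)]
    have hB2 := Finset.sum_eq_sum_sdiff_singleton_add (Finset.mem_univ l)
      (fun k => lam k * χ k ^ 2)
    rw [hB2]
    ring
  have hexp : lam l * (t - χ l) * (p + (t + χ l) / 2)
      = lam l * (t - χ l) * p + (1 / 2) * (lam l * t ^ 2 - lam l * χ l ^ 2) := by ring
  simp only [Rfun]
  rw [hsum, hexp]
  linarith

lemma Rfun_clamp_le (hB : B.PosDef) (hσ : 0 < σ) (hlam : ∀ l, 0 < lam l)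
    (hχ : ∀ k, -1 ≤ χ k) :
    Rfun σ lam B (fun k => min (χ k) 0) ≤ Rfun σ lam B χ := by
  have main : ∀ s : Finset (Fin L),
      Rfun σ lam B (fun k => if k ∈ s then min (χ k) 0 else χ k) ≤ Rfun σ lam B χ := by
    intro s
    induction s using Finset.induction_on with
    | empty => simp
    | @insert a s ha ih =>
      set F : Fin L → ℝ := fun k => if k ∈ s then min (χ k) 0 else χ k with hF
      have hFχ : ∀ k, -1 ≤ F k := by
        intro k
        simp only [hF]
        split
        · exact le_min (hχ k) (by norm_num)
        · exact hχ k
      have heq : (fun k => if k ∈ insert a s then min (χ k) 0 else χ k)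
          = Function.update F a (min (χ a) 0) := by
        funext k
        rcases eq_or_ne k a with rfl | hk
        · simp [Function.update_self, hF]
        · simp [Function.update_of_ne hk, hF, hk]
      have hFa : F a = χ a := by simp [hF, ha]
      have ht : -1 ≤ min (χ a) 0 := le_min (hχ a) (by norm_num)
      have hkey := Rfun_update_le (χ := F) hB hσ hlam hFχ a ht
      have hp := inv_diag_pos (χ := F) (Cmat_posDef hB hσ hlam hFχ) a
      have hterm : lam a * (min (χ a) 0 - F a)
          * ((Cmat σ lam B F)⁻¹ a a + (min (χ a) 0 + F a) / 2) ≤ 0 := by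
        rcases le_or_gt (χ a) 0 with h | h
        · rw [hFa, min_eq_left h]; ring_nf; simp
        · rw [hFa, min_eq_right h.le]
          have h1 : (0 : ℝ) - χ a < 0 := by linarith
          have h2 : 0 < (Cmat σ lam B F)⁻¹ a a + (0 + χ a) / 2 := by positivity
          exact (mul_neg_of_neg_of_pos (mul_neg_of_pos_of_neg (hlam a) h1) h2).le
      rw [heq]
      calc Rfun σ lam B (Function.update F a (min (χ a) 0))
          ≤ Rfun σ lam B F + lam a * (min (χ a) 0 - F a)
            * ((Cmat σ lam B F)⁻¹ a a + (min (χ a) 0 + F a) / 2) := hkey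
        _ ≤ Rfun σ lam B F := by linarith
        _ ≤ Rfun σ lam B χ := ih
  have := main Finset.univ
  simpa using this

end

/-- for every `σ > 1`, the function `χ ↦ R(χ,σ)` attains a global minimum
over `[-1,∞)^L` at some point of the open cube `(-1,0)^L`. -/
theorem stmt2 {L : ℕ} (hL : 0 < L) (lam : Fin L → ℝ) (hlam : ∀ l, 0 < lam l)
    (B : Matrix (Fin L) (Fin L) ℝ) (hB : B.PosDef) (hBdiag : ∀ l, B l l = 1)
    (σ : ℝ) (hσ : 1 < σ) :
    ∃ χs : Fin L → ℝ, (∀ l, -1 < χs l ∧ χs l < 0) ∧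
      ∀ χ : Fin L → ℝ, (∀ l, -1 ≤ χ l) → Rfun σ lam B χs ≤ Rfun σ lam B χ := by
  have hσ0 : 0 < σ := lt_trans one_pos hσ
  set K : Set (Fin L → ℝ) := Set.Icc (fun _ => -1) (fun _ => 0) with hK
  have hKc : IsCompact K := isCompact_Icc
  have hKne : K.Nonempty := ⟨fun _ => -1, Set.mem_Icc.mpr ⟨le_refl _, fun l => by norm_num⟩⟩
  have hmem : ∀ x ∈ K, ∀ l, -1 ≤ x l ∧ x l ≤ 0 := by
    intro x hx l
    obtain ⟨h1, h2⟩ := Set.mem_Icc.mp hx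
    exact ⟨h1 l, h2 l⟩
  have hdetc : Continuous fun χ : Fin L → ℝ => (Cmat σ lam B χ).det := by
    apply Continuous.matrix_det
    apply Continuous.add continuous_const
    apply Continuous.matrix_diagonal
    exact continuous_pi fun l => continuous_const.mul ((continuous_apply l).add continuous_const)
  have hsumc : Continuous fun χ : Fin L → ℝ => (1 / 2 : ℝ) * ∑ l, lam l * χ l ^ 2 :=
    continuous_const.mul (continuous_finset_sum _ fun l _ =>
      continuous_const.mul ((continuous_apply l).pow 2))
  have hcont : ContinuousOn (Rfun σ lam B) K := by
    intro x hx
    apply ContinuousAt.continuousWithinAt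
    have hdpos : 0 < (Cmat σ lam B x).det :=
      (Cmat_posDef hB hσ0 hlam (fun l => (hmem x hx l).1)).det_pos
    show ContinuousAt (fun χ => Real.log (Cmat σ lam B χ).det
      + (1 / 2 : ℝ) * ∑ l, lam l * χ l ^ 2) x
    exact (hdetc.continuousAt.log hdpos.ne').add hsumc.continuousAt
  obtain ⟨χs, hχsK, hmin⟩ := hKc.exists_isMinOn hKne hcont
  have hχs1 : ∀ l, -1 ≤ χs l := fun l => (hmem _ hχsK l).1
  have hχs0 : ∀ l, χs l ≤ 0 := fun l => (hmem _ hχsK l).2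
  have hC : (Cmat σ lam B χs).PosDef := Cmat_posDef hB hσ0 hlam hχs1
  have hpp : ∀ l, 0 < (Cmat σ lam B χs)⁻¹ l l := fun l => inv_diag_pos hC l
  have hpl : ∀ l, σ * (Cmat σ lam B χs)⁻¹ l l ≤ 1 := fun l =>
    inv_diag_le hB hBdiag hσ0 hlam hχs1 l
  have hplt1 : ∀ l, (Cmat σ lam B χs)⁻¹ l l < 1 := fun l => by nlinarith [hpp l, hpl l, hσ]
  refine ⟨χs, fun l => ⟨?_, ?_⟩, ?_⟩
  · by_contra h
    have hl : χs l = -1 := le_antisymm (not_lt.mp h) (hχs1 l)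
    set p : ℝ := (Cmat σ lam B χs)⁻¹ l l with hpdef
    have hupd : Function.update χs l (-p) ∈ K := by
      refine Set.mem_Icc.mpr ⟨fun k => ?_, fun k => ?_⟩
      · rw [Function.update_apply]
        split
        · show (-1 : ℝ) ≤ -p
          linarith [hplt1 l]
        · exact hχs1 k
      · rw [Function.update_apply]
        split
        · show -p ≤ (0 : ℝ)
          linarith [hpp l]
        · exact hχs0 k
    have h1 := isMinOn_iff.mp hmin _ hupd
    have h2 := Rfun_update_le (χ := χs) hB hσ0 hlam hχs1 l (t := -p) (by linarith [hplt1 l])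
    rw [hl] at h2
    have h3 : lam l * (-p - -1) * (p + (-p + -1) / 2) < 0 :=
      mul_neg_of_pos_of_neg (mul_pos (hlam l) (by linarith [hplt1 l]))
        (by linarith [hplt1 l])
    rw [← hpdef] at h2
    linarith
  · by_contra h
    have hl : χs l = 0 := le_antisymm (hχs0 l) (not_lt.mp h)
    set p : ℝ := (Cmat σ lam B χs)⁻¹ l l with hpdef
    have hupd : Function.update χs l (-(p / 2)) ∈ K := by
      refine Set.mem_Icc.mpr ⟨fun k => ?_, fun k => ?_⟩
      · rw [Function.update_apply]
        split
        · show (-1 : ℝ) ≤ -(p / 2)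
          linarith [hplt1 l, hpp l]
        · exact hχs1 k
      · rw [Function.update_apply]
        split
        · show -(p / 2) ≤ (0 : ℝ)
          linarith [hpp l]
        · exact hχs0 k
    have h1 := isMinOn_iff.mp hmin _ hupd
    have h2 := Rfun_update_le (χ := χs) hB hσ0 hlam hχs1 l (t := -(p / 2))
      (by linarith [hplt1 l, hpp l])
    rw [hl] at h2
    have h3 : lam l * (-(p / 2) - 0) * (p + (-(p / 2) + 0) / 2) < 0 :=
      mul_neg_of_neg_of_pos (mul_neg_of_pos_of_neg (hlam l) (by linarith [hpp l]))
        (by linarith [hpp l])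
    rw [← hpdef] at h2
    linarith
  · intro χ hχ
    have hclamp : (fun k => min (χ k) 0) ∈ K :=
      Set.mem_Icc.mpr ⟨fun k => le_min (hχ k) (by norm_num), fun k => min_le_right _ _⟩
    exact le_trans (isMinOn_iff.mp hmin _ hclamp) (Rfun_clamp_le hB hσ0 hlam hχ)
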